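/- The cohomology of the quantum exterior algebra (⋀_q V_{2π}, d_{∧_q}) is spanned by 1 and v_2∧v_0∧v_{-2}; i.e., H⁰ and H³ are 1-dimensional and H¹ = H² = 0. -/

import Mathlib

noncomputable section

open FreeAlgebra

/-- The defining relations of the quantum exterior algebra ⋀_q V_{2π}:
generators v_2 = ι 0, v_0 = ι 1, v_{-2} = ι 2. -/
inductive ExtRel (q : ℂ) : FreeAlgebra ℂ (Fin 3) → FreeAlgebra ℂ (Fin 3) → Prop
  | r1 : ExtRel q (ι ℂ 0 * ι ℂ 0) 0
  | r2 : ExtRel q (ι ℂ 2 * ι ℂ 2) 0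
  | r3 : ExtRel q (ι ℂ 1 * ι ℂ 0) (-((q ^ 2)⁻¹ • (ι ℂ 0 * ι ℂ 1)))
  | r4 : ExtRel q (ι ℂ 2 * ι ℂ 1) (-((q ^ 2)⁻¹ • (ι ℂ 1 * ι ℂ 2)))
  | r5 : ExtRel q (ι ℂ 1 * ι ℂ 1) (((1 - q ^ 4) / q ^ 3) • (ι ℂ 0 * ι ℂ 2))
  | r6 : ExtRel q (ι ℂ 2 * ι ℂ 0) (-(ι ℂ 0 * ι ℂ 2))

/-- The quantum exterior algebra ⋀_q V_{2π}. -/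
abbrev ExtQ (q : ℂ) := RingQuot (ExtRel q)

def ev2 (q : ℂ) : ExtQ q := RingQuot.mkAlgHom ℂ (ExtRel q) (ι ℂ 0)
def ev0 (q : ℂ) : ExtQ q := RingQuot.mkAlgHom ℂ (ExtRel q) (ι ℂ 1)
def evm2 (q : ℂ) : ExtQ q := RingQuot.mkAlgHom ℂ (ExtRel q) (ι ℂ 2)

section MatrixModel
open Matrix
def E (i j : Fin 8) (a : ℂ) : Matrix (Fin 8) (Fin 8) ℂ := single i j a
def Xm : Matrix (Fin 8) (Fin 8) ℂ := E 1 0 1 + E 4 2 1 + E 5 3 1 + E 7 6 1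
def Ym (q : ℂ) : Matrix (Fin 8) (Fin 8) ℂ :=
  E 2 0 1 + E 4 1 (-(q^2)⁻¹) + E 5 2 ((1-q^4)/q^3) + E 6 3 1 + E 7 5 (-(q^2)⁻¹)
def Zm (q : ℂ) : Matrix (Fin 8) (Fin 8) ℂ :=
  E 3 0 1 + E 5 1 (-1) + E 6 2 (-(q^2)⁻¹) + E 7 4 ((q^2)⁻¹)

lemma mulE (i j k l : Fin 8) (a b : ℂ) :
    E i j a * E k l b = if j = k then E i l (a*b) else 0 := by
  unfold E
  split
  · subst ‹j = k›; exact single_mul_single_same (c := a) i j l b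
  · exact single_mul_single_of_ne (c := a) (i := i) (j := j) (k := k) (h := ‹j ≠ k›) (d := b)

lemma smulE (r : ℂ) (i j : Fin 8) (a : ℂ) : r • E i j a = E i j (r * a) := by
  unfold E; rw [smul_single]; rfl

lemma negE (i j : Fin 8) (a : ℂ) : -E i j a = E i j (-a) := by
  unfold E; ext a b; simp [single]; split <;> simp

lemma Eext (i j : Fin 8) {a b : ℂ} (h : a = b) : E i j a = E i j b := by rw [h]

lemma XX : Xm * Xm = 0 := by
  simp [Xm, add_mul, mul_add, mulE]

lemma ZZ (q : ℂ) : Zm q * Zm q = 0 := by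
  simp [Zm, add_mul, mul_add, mulE]

lemma YX (q : ℂ) : Ym q * Xm = -((q^2)⁻¹ • (Xm * Ym q)) := by
  simp [Xm, Ym, add_mul, mul_add, mulE, smul_add, smulE, neg_add, negE]
  abel

lemma ZY (q : ℂ) : Zm q * Ym q = -((q^2)⁻¹ • (Ym q * Zm q)) := by
  simp [Ym, Zm, add_mul, mul_add, mulE, smul_add, smulE, neg_add, negE]
  ring_nf
  abel

lemma YY (q : ℂ) : Ym q * Ym q = ((1-q^4)/q^3) • (Xm * Zm q) := by
  simp [Xm, Ym, Zm, add_mul, mul_add, mulE, smul_add, smulE, negE]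
  ring_nf

lemma ZX (q : ℂ) : Zm q * Xm = -(Xm * Zm q) := by
  simp [Xm, Zm, add_mul, mul_add, mulE, neg_add, negE]
  ring_nf
  abel

lemma mXY (q : ℂ) : Xm * Ym q = E 4 0 1 + E 7 3 1 := by
  simp [Xm, Ym, add_mul, mul_add, mulE]

lemma mXZ (q : ℂ) : Xm * Zm q = E 5 0 1 + E 7 2 (-(q^2)⁻¹) := by
  simp [Xm, Zm, add_mul, mul_add, mulE]

lemma mYZ (q : ℂ) : Ym q * Zm q = E 6 0 1 + E 7 1 ((q^2)⁻¹) := by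
  simp [Ym, Zm, add_mul, mul_add, mulE]

lemma mXYZ (q : ℂ) : Xm * Ym q * Zm q = E 7 0 1 := by
  rw [mXY]
  simp [Zm, add_mul, mul_add, mulE]

end MatrixModel

def preφ (q : ℂ) : FreeAlgebra ℂ (Fin 3) →ₐ[ℂ] Matrix (Fin 8) (Fin 8) ℂ :=
  FreeAlgebra.lift ℂ ![Xm, Ym q, Zm q]

lemma preφ_rel (q : ℂ) : ∀ ⦃a b⦄, ExtRel q a b → preφ q a = preφ q b := by
  intro a b h
  induction h with
  | r1 => simp [preφ, XX]
  | r2 => simp [preφ, ZZ]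
  | r3 => simpa [preφ] using YX q
  | r4 => simpa [preφ] using ZY q
  | r5 => simpa [preφ] using YY q
  | r6 => simpa [preφ] using ZX q

def φ (q : ℂ) : ExtQ q →ₐ[ℂ] Matrix (Fin 8) (Fin 8) ℂ :=
  RingQuot.liftAlgHom ℂ ⟨preφ q, preφ_rel q⟩

lemma φ_v2 (q : ℂ) : φ q (ev2 q) = Xm := by
  simp [φ, ev2, RingQuot.liftAlgHom_mkAlgHom_apply, preφ]
lemma φ_v0 (q : ℂ) : φ q (ev0 q) = Ym q := by
  simp [φ, ev0, RingQuot.liftAlgHom_mkAlgHom_apply, preφ]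
lemma φ_vm (q : ℂ) : φ q (evm2 q) = Zm q := by
  simp [φ, evm2, RingQuot.liftAlgHom_mkAlgHom_apply, preφ]

section ExtQrel
variable (q : ℂ)

local notation "x" => ev2 q
local notation "y" => ev0 q
local notation "z" => evm2 q

lemma relxx : x * x = 0 := by
  have := RingQuot.mkAlgHom_rel ℂ (ExtRel.r1 (q := q))
  simpa [ev2, _root_.map_mul] using this

lemma relzz : z * z = 0 := by
  have := RingQuot.mkAlgHom_rel ℂ (ExtRel.r2 (q := q))
  simpa [evm2, _root_.map_mul] using this

lemma relyx : y * x = -((q^2)⁻¹ • (x * y)) := by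
  have := RingQuot.mkAlgHom_rel ℂ (ExtRel.r3 (q := q))
  simpa [ev2, ev0, _root_.map_mul, _root_.map_neg, _root_.map_smul] using this

lemma relzy : z * y = -((q^2)⁻¹ • (y * z)) := by
  have := RingQuot.mkAlgHom_rel ℂ (ExtRel.r4 (q := q))
  simpa [ev0, evm2, _root_.map_mul, _root_.map_neg, _root_.map_smul] using this

lemma relyy : y * y = ((1-q^4)/q^3) • (x * z) := by
  have := RingQuot.mkAlgHom_rel ℂ (ExtRel.r5 (q := q))
  simpa [ev2, ev0, evm2, _root_.map_mul, _root_.map_smul] using this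

lemma relzx : z * x = -(x * z) := by
  have := RingQuot.mkAlgHom_rel ℂ (ExtRel.r6 (q := q))
  simpa [ev2, evm2, _root_.map_mul, _root_.map_neg] using this

end ExtQrel

section Main
variable (q : ℂ)

def B : Fin 8 → ExtQ q :=
  ![1, ev2 q, ev0 q, evm2 q, ev2 q * ev0 q, ev2 q * evm2 q, ev0 q * evm2 q,
    ev2 q * ev0 q * evm2 q]

lemma φB0 : φ q (B q 0) = 1 := by rw [show B q 0 = 1 from rfl, _root_.map_one]
lemma φB1 : φ q (B q 1) = Xm := by rw [show B q 1 = ev2 q from rfl, φ_v2]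
lemma φB2 : φ q (B q 2) = Ym q := by rw [show B q 2 = ev0 q from rfl, φ_v0]
lemma φB3 : φ q (B q 3) = Zm q := by rw [show B q 3 = evm2 q from rfl, φ_vm]
lemma φB4 : φ q (B q 4) = E 4 0 1 + E 7 3 1 := by
  rw [show B q 4 = ev2 q * ev0 q from rfl, _root_.map_mul, φ_v2, φ_v0, mXY]
lemma φB5 : φ q (B q 5) = E 5 0 1 + E 7 2 (-(q^2)⁻¹) := by
  rw [show B q 5 = ev2 q * evm2 q from rfl, _root_.map_mul, φ_v2, φ_vm, mXZ]
lemma φB6 : φ q (B q 6) = E 6 0 1 + E 7 1 ((q^2)⁻¹) := by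
  rw [show B q 6 = ev0 q * evm2 q from rfl, _root_.map_mul, φ_v0, φ_vm, mYZ]
lemma φB7 : φ q (B q 7) = E 7 0 1 := by
  rw [show B q 7 = ev2 q * ev0 q * evm2 q from rfl, _root_.map_mul, _root_.map_mul,
    φ_v2, φ_v0, φ_vm, mXYZ]

lemma row0 (j : Fin 8) : φ q (B q 0) j 0 = if (0:Fin 8) = j then 1 else 0 := by
  rw [φB0]; fin_cases j <;> simp [Matrix.one_apply]
lemma row1 (j : Fin 8) : φ q (B q 1) j 0 = if (1:Fin 8) = j then 1 else 0 := by
  rw [φB1]; fin_cases j <;> simp [Xm, E, Matrix.single]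
lemma row2 (j : Fin 8) : φ q (B q 2) j 0 = if (2:Fin 8) = j then 1 else 0 := by
  rw [φB2]; fin_cases j <;> simp [Ym, E, Matrix.single]
lemma row3 (j : Fin 8) : φ q (B q 3) j 0 = if (3:Fin 8) = j then 1 else 0 := by
  rw [φB3]; fin_cases j <;> simp [Zm, E, Matrix.single]
lemma row4 (j : Fin 8) : φ q (B q 4) j 0 = if (4:Fin 8) = j then 1 else 0 := by
  rw [φB4]; fin_cases j <;> simp [E, Matrix.single]
lemma row5 (j : Fin 8) : φ q (B q 5) j 0 = if (5:Fin 8) = j then 1 else 0 := by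
  rw [φB5]; fin_cases j <;> simp [E, Matrix.single]
lemma row6 (j : Fin 8) : φ q (B q 6) j 0 = if (6:Fin 8) = j then 1 else 0 := by
  rw [φB6]; fin_cases j <;> simp [E, Matrix.single]
lemma row7 (j : Fin 8) : φ q (B q 7) j 0 = if (7:Fin 8) = j then 1 else 0 := by
  rw [φB7]; fin_cases j <;> simp [E, Matrix.single]

lemma φB (i j : Fin 8) : φ q (B q i) j 0 = if i = j then 1 else 0 := by
  fin_cases i
  · exact row0 q j
  · exact row1 q j
  · exact row2 q j
  · exact row3 q j
  · exact row4 q j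
  · exact row5 q j
  · exact row6 q j
  · exact row7 q j

lemma Bval0 : B q 0 = 1 := rfl
lemma Bval1 : B q 1 = ev2 q := rfl
lemma Bval2 : B q 2 = ev0 q := rfl
lemma Bval3 : B q 3 = evm2 q := rfl
lemma Bval4 : B q 4 = ev2 q * ev0 q := rfl
lemma Bval5 : B q 5 = ev2 q * evm2 q := rfl
lemma Bval6 : B q 6 = ev0 q * evm2 q := rfl
lemma Bval7 : B q 7 = ev2 q * ev0 q * evm2 q := rfl

lemma coeff_sum (u : Fin 8 → ℂ) (j : Fin 8) : φ q (∑ i, u i • B q i) j 0 = u j := by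
  rw [map_sum]
  simp [Matrix.sum_apply, _root_.map_smul, Matrix.smul_apply, φB, mul_ite]

lemma coeff_unique {u v : Fin 8 → ℂ} (h : ∑ i, u i • B q i = ∑ i, v i • B q i) : u = v :=
  funext fun j => by
    have := congrArg (fun w => φ q w j 0) h
    simpa [coeff_sum] using this

def S : Submodule ℂ (ExtQ q) := Submodule.span ℂ (Set.range (B q))

lemma hBmem (i : Fin 8) : B q i ∈ S q := Submodule.subset_span ⟨i, rfl⟩

lemma nmul (a b : ExtQ q) : -a * b = -(a * b) := neg_mul a b
lemma mneg (a b : ExtQ q) : a * -b = -(a * b) := mul_neg a b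

-- helper products
lemma xyy : ev2 q * ev0 q * ev0 q = 0 := by
  rw [mul_assoc, relyy, mul_smul_comm, ← mul_assoc, relxx, zero_mul, smul_zero]

lemma xxz : ev2 q * (ev2 q * evm2 q) = 0 := by
  rw [← mul_assoc, relxx, zero_mul]

lemma xxy : ev2 q * (ev2 q * ev0 q) = 0 := by
  rw [← mul_assoc, relxx, zero_mul]

lemma y_xy : ev0 q * (ev2 q * ev0 q) = 0 := by
  rw [← mul_assoc, relyx, nmul, smul_mul_assoc, xyy, smul_zero, neg_zero]

lemma z_xy : evm2 q * (ev2 q * ev0 q) = (q^2)⁻¹ • (ev2 q * ev0 q * evm2 q) := by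
  rw [← mul_assoc, relzx, nmul, mul_assoc, relzy, mneg, mul_smul_comm, neg_neg,
    ← mul_assoc]

lemma mulx_mem (i : Fin 8) : ev2 q * B q i ∈ S q := by
  fin_cases i
  · show ev2 q * (1) ∈ S q
    rw [mul_one]; exact hBmem q 1
  · show ev2 q * (ev2 q) ∈ S q
    rw [relxx]; exact (S q).zero_mem
  · exact hBmem q 4
  · exact hBmem q 5
  · show ev2 q * (ev2 q * ev0 q) ∈ S q
    rw [xxy]; exact (S q).zero_mem
  · show ev2 q * (ev2 q * evm2 q) ∈ S q
    rw [xxz]; exact (S q).zero_mem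
  · show ev2 q * (ev0 q * evm2 q) ∈ S q
    rw [← mul_assoc]; exact hBmem q 7
  · show ev2 q * (ev2 q * ev0 q * evm2 q) ∈ S q
    rw [← mul_assoc, ← mul_assoc, relxx,
      zero_mul, zero_mul]
    exact (S q).zero_mem

lemma muly_mem (i : Fin 8) : ev0 q * B q i ∈ S q := by
  fin_cases i
  · show ev0 q * (1) ∈ S q
    rw [mul_one]; exact hBmem q 2
  · show ev0 q * (ev2 q) ∈ S q
    rw [relyx]
    exact (S q).neg_mem ((S q).smul_mem _ (hBmem q 4))
  · show ev0 q * (ev0 q) ∈ S q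
    rw [relyy]
    exact (S q).smul_mem _ (hBmem q 5)
  · exact hBmem q 6
  · show ev0 q * (ev2 q * ev0 q) ∈ S q
    rw [y_xy]; exact (S q).zero_mem
  · show ev0 q * (ev2 q * evm2 q) ∈ S q
    rw [← mul_assoc, relyx, nmul, smul_mul_assoc, mul_assoc]
    exact (S q).neg_mem ((S q).smul_mem _ (show ev2 q * (ev0 q * evm2 q) ∈ S q by
      rw [← mul_assoc]; exact hBmem q 7))
  · show ev0 q * (ev0 q * evm2 q) ∈ S q
    rw [← mul_assoc, relyy, smul_mul_assoc, mul_assoc,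
      relzz, mul_zero, smul_zero]
    exact (S q).zero_mem
  · show ev0 q * (ev2 q * ev0 q * evm2 q) ∈ S q
    rw [← mul_assoc, y_xy, zero_mul]
    exact (S q).zero_mem

lemma mulz_mem (i : Fin 8) : evm2 q * B q i ∈ S q := by
  fin_cases i
  · show evm2 q * (1) ∈ S q
    rw [mul_one]; exact hBmem q 3
  · show evm2 q * (ev2 q) ∈ S q
    rw [relzx]; exact (S q).neg_mem (hBmem q 5)
  · show evm2 q * (ev0 q) ∈ S q
    rw [relzy]
    exact (S q).neg_mem ((S q).smul_mem _ (hBmem q 6))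
  · show evm2 q * (evm2 q) ∈ S q
    rw [relzz]; exact (S q).zero_mem
  · show evm2 q * (ev2 q * ev0 q) ∈ S q
    rw [z_xy]
    exact (S q).smul_mem _ (hBmem q 7)
  · show evm2 q * (ev2 q * evm2 q) ∈ S q
    rw [← mul_assoc, relzx, nmul, mul_assoc, relzz, mul_zero, neg_zero]
    exact (S q).zero_mem
  · show evm2 q * (ev0 q * evm2 q) ∈ S q
    rw [← mul_assoc, relzy, nmul, smul_mul_assoc, mul_assoc, relzz, mul_zero, smul_zero, neg_zero]
    exact (S q).zero_mem
  · show evm2 q * (ev2 q * ev0 q * evm2 q) ∈ S q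
    rw [← mul_assoc, z_xy, smul_mul_assoc,
      mul_assoc, relzz, mul_zero, smul_zero]
    exact (S q).zero_mem

lemma leftmul {g : ExtQ q} (h : ∀ i, g * B q i ∈ S q) : ∀ t ∈ S q, g * t ∈ S q := by
  intro t ht
  induction ht using Submodule.span_induction with
  | mem w hw => obtain ⟨i, rfl⟩ := hw; exact h i
  | zero => rw [mul_zero]; exact (S q).zero_mem
  | add a b _ _ ha hb => rw [mul_add]; exact (S q).add_mem ha hb
  | smul r a _ ha => rw [mul_smul_comm]; exact (S q).smul_mem r ha

lemma mem_S (w : ExtQ q) : w ∈ S q := by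
  obtain ⟨f, rfl⟩ := RingQuot.mkAlgHom_surjective ℂ (ExtRel q) w
  have key : ∀ f : FreeAlgebra ℂ (Fin 3),
      ∀ t ∈ S q, RingQuot.mkAlgHom ℂ (ExtRel q) f * t ∈ S q := by
    intro f
    induction f using FreeAlgebra.induction with
    | grade0 r =>
      intro t ht
      rw [AlgHom.commutes, ← Algebra.smul_def]
      exact (S q).smul_mem r ht
    | grade1 i =>
      fin_cases i
      · exact leftmul q (mulx_mem q)
      · exact leftmul q (muly_mem q)
      · exact leftmul q (mulz_mem q)
    | mul a b ha hb =>
      intro t ht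
      rw [_root_.map_mul, mul_assoc]
      exact ha _ (hb t ht)
    | add a b ha hb =>
      intro t ht
      rw [map_add, add_mul]
      exact (S q).add_mem (ha t ht) (hb t ht)
  have := key f 1 (hBmem q 0)
  simpa using this

lemma decomp (w : ExtQ q) : ∃ u : Fin 8 → ℂ, w = ∑ i, u i • B q i := by
  have h : w ∈ Submodule.span ℂ (Set.range (B q)) := mem_S q w
  obtain ⟨u, hu⟩ := (Submodule.mem_span_range_iff_exists_fun ℂ).mp h
  exact ⟨u, hu.symm⟩

lemma decomp8 (w : ExtQ q) :
    ∃ u : Fin 8 → ℂ,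
      w = u 0 • 1 + u 1 • ev2 q + u 2 • ev0 q + u 3 • evm2 q + u 4 • (ev2 q * ev0 q) +
        u 5 • (ev2 q * evm2 q) + u 6 • (ev0 q * evm2 q) +
        u 7 • (ev2 q * ev0 q * evm2 q) := by
  obtain ⟨u, hu⟩ := decomp q w
  refine ⟨u, ?_⟩
  rw [hu, Fin.sum_univ_eight]; rfl

lemma indep8 (u : Fin 8 → ℂ)
    (h : u 0 • (1 : ExtQ q) + u 1 • ev2 q + u 2 • ev0 q + u 3 • evm2 q +
      u 4 • (ev2 q * ev0 q) + u 5 • (ev2 q * evm2 q) + u 6 • (ev0 q * evm2 q) +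
      u 7 • (ev2 q * ev0 q * evm2 q) = 0) : ∀ i, u i = 0 := by
  have h' : ∑ i, u i • B q i = ∑ i, (fun _ : Fin 8 => (0:ℂ)) i • B q i := by
    rw [Fin.sum_univ_eight]
    simpa [Bval0, Bval1, Bval2, Bval3, Bval4, Bval5, Bval6, Bval7] using h
  exact fun i => congrFun (coeff_unique q h') i

end Main

section Diff
variable (q c : ℂ)

lemma xzz : ev2 q * evm2 q * evm2 q = 0 := by
  rw [mul_assoc, relzz, mul_zero]

lemma y_yz : ev0 q * (ev0 q * evm2 q) = 0 := by
  rw [← mul_assoc, relyy, smul_mul_assoc, xzz, smul_zero]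

variable (d : ExtQ q →ₗ[ℂ] ExtQ q)
  (hd1 : d 1 = 0)
  (hdv2 : d (ev2 q) = -((1 / c : ℂ) • (ev2 q * ev0 q)))
  (hdv0 : d (ev0 q) = ((1 + q ^ 2) / (q * c)) • (ev2 q * evm2 q))
  (hdvm : d (evm2 q) = -((1 / c : ℂ) • (ev0 q * evm2 q)))
  (hLeib2 : ∀ a : ExtQ q, d (ev2 q * a) = d (ev2 q) * a - ev2 q * d a)
  (hLeib0 : ∀ a : ExtQ q, d (ev0 q * a) = d (ev0 q) * a - ev0 q * d a)

include hdv2 hdv0 hLeib2 in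
lemma dB4 : d (ev2 q * ev0 q) = 0 := by
  rw [hLeib2, hdv2, hdv0, nmul, smul_mul_assoc, xyy, smul_zero, neg_zero, mul_smul_comm,
    xxz, smul_zero, sub_zero]

include hdv2 hdvm hLeib2 in
lemma dB5 : d (ev2 q * evm2 q) = 0 := by
  rw [hLeib2, hdv2, hdvm, mneg, mul_smul_comm, ← mul_assoc, nmul, smul_mul_assoc,
    sub_neg_eq_add, neg_add_cancel]

include hdv0 hdvm hLeib0 in
lemma dB6 : d (ev0 q * evm2 q) = 0 := by
  rw [hLeib0, hdv0, hdvm, smul_mul_assoc, xzz, smul_zero, mneg, mul_smul_comm, y_yz,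
    smul_zero, neg_zero, sub_zero]

include hdv2 hdv0 hdvm hLeib2 hLeib0 in
lemma dB7 : d (ev2 q * ev0 q * evm2 q) = 0 := by
  rw [mul_assoc, hLeib2, dB6 q c d hdv0 hdvm hLeib0, mul_zero, sub_zero, hdv2, nmul,
    smul_mul_assoc, ← mul_assoc, xyy, zero_mul, smul_zero, neg_zero]

include hd1 hdv2 hdv0 hdvm hLeib2 hLeib0 in
lemma d_sum (u : Fin 8 → ℂ) :
    d (u 0 • 1 + u 1 • ev2 q + u 2 • ev0 q + u 3 • evm2 q + u 4 • (ev2 q * ev0 q) +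
        u 5 • (ev2 q * evm2 q) + u 6 • (ev0 q * evm2 q) +
        u 7 • (ev2 q * ev0 q * evm2 q)) =
      (u 1 * -(1/c)) • (ev2 q * ev0 q) + (u 2 * ((1 + q^2)/(q*c))) • (ev2 q * evm2 q) +
        (u 3 * -(1/c)) • (ev0 q * evm2 q) := by
  simp only [map_add, _root_.map_smul, hd1, hdv2, hdv0, hdvm,
    dB4 q c d hdv2 hdv0 hLeib2, dB5 q c d hdv2 hdvm hLeib2,
    dB6 q c d hdv0 hdvm hLeib0, dB7 q c d hdv2 hdv0 hdvm hLeib2 hLeib0]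
  module

end Diff


/-- The cohomology of (⋀_q V_{2π}, d_{∧_q}) is spanned by 1 and
v_2∧v_0∧v_{-2}: every closed element is, modulo an exact one, a linear combination
a·1 + b·(v_2∧v_0∧v_{-2}), and no nonzero such combination is exact.  (Hence H⁰ and H³
are 1-dimensional and H¹ = H² = 0.) -/
theorem quantum_exterior_cohomology
    (q c : ℂ) (hq : q ≠ 0) (hc : c ≠ 0) (hroot : ∀ n : ℕ, 0 < n → q ^ n ≠ 1)
    (d : ExtQ q →ₗ[ℂ] ExtQ q)
    (hd1 : d 1 = 0)
    (hdv2 : d (ev2 q) = -((1 / c : ℂ) • (ev2 q * ev0 q)))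
    (hdv0 : d (ev0 q) = ((1 + q ^ 2) / (q * c)) • (ev2 q * evm2 q))
    (hdvm : d (evm2 q) = -((1 / c : ℂ) • (ev0 q * evm2 q)))
    (hLeib2 : ∀ a : ExtQ q, d (ev2 q * a) = d (ev2 q) * a - ev2 q * d a)
    (hLeib0 : ∀ a : ExtQ q, d (ev0 q * a) = d (ev0 q) * a - ev0 q * d a)
    (hLeibm : ∀ a : ExtQ q, d (evm2 q * a) = d (evm2 q) * a - evm2 q * d a) :
    (∀ ω : ExtQ q, d ω = 0 →
      ∃ (a b : ℂ) (μ : ExtQ q),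
        ω = a • (1 : ExtQ q) + b • (ev2 q * ev0 q * evm2 q) + d μ) ∧
    (∀ a b : ℂ,
      (∃ μ : ExtQ q, a • (1 : ExtQ q) + b • (ev2 q * ev0 q * evm2 q) = d μ) →
      a = 0 ∧ b = 0) := by
  have h1q2 : (1 : ℂ) + q ^ 2 ≠ 0 := by
    intro h
    have hq2 : q ^ 2 = -1 := by linear_combination h
    have : q ^ 4 = 1 := by
      have : q ^ 4 = (q ^ 2) ^ 2 := by ring
      rw [this, hq2]; ring
    exact hroot 4 (by norm_num) this
  constructor
  · intro ω hω
    obtain ⟨u, hu⟩ := decomp8 q ω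
    have hdω := d_sum q c d hd1 hdv2 hdv0 hdvm hLeib2 hLeib0 u
    rw [← hu, hω] at hdω
    have hz' : (0:ℂ) • (1 : ExtQ q) + (0:ℂ) • ev2 q + (0:ℂ) • ev0 q + (0:ℂ) • evm2 q +
        (u 1 * -(1/c)) • (ev2 q * ev0 q) + (u 2 * ((1 + q^2)/(q*c))) • (ev2 q * evm2 q) +
        (u 3 * -(1/c)) • (ev0 q * evm2 q) + (0:ℂ) • (ev2 q * ev0 q * evm2 q) = 0 := by
      simp only [zero_smul, zero_add, add_zero]
      exact hdω.symm
    have hind := indep8 q ![0, 0, 0, 0, u 1 * -(1/c), u 2 * ((1 + q^2)/(q*c)),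
      u 3 * -(1/c), 0] hz'
    have hu1 : u 1 = 0 := by
      have h4 : u 1 * -(1/c) = 0 := hind 4
      field_simp at h4
      simpa using h4
    have hu2 : u 2 = 0 := by
      have h5 : u 2 * ((1 + q^2)/(q*c)) = 0 := hind 5
      rcases mul_eq_zero.mp h5 with h | h
      · exact h
      · exact absurd h (div_ne_zero h1q2 (mul_ne_zero hq hc))
    have hu3 : u 3 = 0 := by
      have h6 : u 3 * -(1/c) = 0 := hind 6
      field_simp at h6
      simpa using h6
    refine ⟨u 0, u 7, (-(c * u 4)) • ev2 q + ((q * c / (1 + q^2)) * u 5) • ev0 q +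
      (-(c * u 6)) • evm2 q, ?_⟩
    have hdμ : d ((-(c * u 4)) • ev2 q + ((q * c / (1 + q^2)) * u 5) • ev0 q +
        (-(c * u 6)) • evm2 q) =
        u 4 • (ev2 q * ev0 q) + u 5 • (ev2 q * evm2 q) + u 6 • (ev0 q * evm2 q) := by
      simp only [map_add, _root_.map_smul, hdv2, hdv0, hdvm]
      match_scalars <;> (field_simp; try ring)
    rw [hdμ, hu, hu1, hu2, hu3]
    module
  · rintro a b ⟨μ, hμ⟩
    obtain ⟨m, hm⟩ := decomp8 q μ
    have hdμ := d_sum q c d hd1 hdv2 hdv0 hdvm hLeib2 hLeib0 m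
    rw [← hm] at hdμ
    rw [hdμ] at hμ
    have h0 : a • (1 : ExtQ q) + b • (ev2 q * ev0 q * evm2 q) -
        ((m 1 * -(1/c)) • (ev2 q * ev0 q) + (m 2 * ((1 + q^2)/(q*c))) • (ev2 q * evm2 q) +
          (m 3 * -(1/c)) • (ev0 q * evm2 q)) = 0 := by
      rw [hμ]; exact sub_self _
    have hz' : a • (1 : ExtQ q) + (0:ℂ) • ev2 q + (0:ℂ) • ev0 q + (0:ℂ) • evm2 q +
        (-(m 1 * -(1/c))) • (ev2 q * ev0 q) + (-(m 2 * ((1 + q^2)/(q*c)))) • (ev2 q * evm2 q) +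
        (-(m 3 * -(1/c))) • (ev0 q * evm2 q) + b • (ev2 q * ev0 q * evm2 q) = 0 := by
      rw [← h0]; module
    have hind := indep8 q ![a, 0, 0, 0, -(m 1 * -(1/c)), -(m 2 * ((1 + q^2)/(q*c))),
      -(m 3 * -(1/c)), b] hz'
    exact ⟨hind 0, hind 7⟩

end
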